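/- Let l be an odd natural number and ω a real number. Then the limit as ε → 0⁺ of ∫₀¹ u^{ε − 1 + iω} P_l(u) du exists and equals (1/(1 + iω)) · ∏_{k=1}^{(l−1)/2} (ω + 2ki)/(ω − (2k+1)i). -/

import Mathlib

open MeasureTheory Filter

noncomputable section

/-- The Legendre polynomial of degree `l`, via Rodrigues' formula. -/
def legendre (l : ℕ) (u : ℝ) : ℝ :=
  (1 / (2 ^ l * (Nat.factorial l : ℝ))) *
    iteratedDeriv l (fun x : ℝ => (x ^ 2 - 1) ^ l) u

open Polynomial Set intervalIntegral


lemma iteratedDeriv_poly (p : ℝ[X]) (n : ℕ) :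
    iteratedDeriv n (fun x => p.eval x) = fun x => (derivative^[n] p).eval x := by
  induction n with
  | zero => simp
  | succ n ih =>
    rw [iteratedDeriv_succ, ih, Function.iterate_succ']
    funext x
    simp [Polynomial.deriv]

lemma q_eq (l : ℕ) : (fun x : ℝ => (x ^ 2 - 1) ^ l) = fun x => (((X:ℝ[X]) ^ 2 - 1) ^ l).eval x := by
  funext x; simp

lemma root_one (l m : ℕ) (hm : m < l) :
    (derivative^[m] (((X:ℝ[X]) ^ 2 - 1) ^ l)).eval 1 = 0 := by
  have hdvd : (X - C (1:ℝ)) ^ l ∣ ((X:ℝ[X]) ^ 2 - 1) ^ l := by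
    apply pow_dvd_pow_of_dvd
    rw [dvd_iff_isRoot]
    simp [IsRoot]
  obtain ⟨r, hr⟩ := Polynomial.pow_sub_dvd_iterate_derivative_of_pow_dvd m hdvd
  rw [hr]
  have : (l - m) ≠ 0 := Nat.sub_ne_zero_of_lt hm
  simp [this]
open Polynomial MeasureTheory intervalIntegral

lemma cont_rpow {e : ℝ} (he : 0 < e) : Continuous fun x : ℝ => x ^ e := by
  rw [continuous_iff_continuousAt]
  intro x
  exact Real.continuousAt_rpow_const x e (Or.inr he.le)

lemma ibp_step (c : ℝ) (hc : 2 ≤ c) (p : ℝ[X]) :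
    ∫ u in (0:ℝ)..1, (c * u ^ (c - 1) * p.eval u + u ^ c * (derivative p).eval u)
      = p.eval 1 := by
  have h := intervalIntegral.integral_eq_sub_of_hasDerivAt (a := (0:ℝ)) (b := 1)
    (f := fun u => u ^ c * p.eval u)
    (f' := fun u => c * u ^ (c - 1) * p.eval u + u ^ c * (derivative p).eval u)
    (fun x _ => by
      exact ((Real.hasDerivAt_rpow_const (x := x) (p := c) (Or.inr (by linarith))).mul
          (p.hasDerivAt x)).congr_deriv (by ring))
    ?_
  · rw [h]
    simp [Real.zero_rpow (show c ≠ 0 by positivity)]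
  · apply Continuous.intervalIntegrable
    have h1 : Continuous fun u : ℝ => u ^ (c - 1) := cont_rpow (by linarith)
    have h2 : Continuous fun u : ℝ => u ^ c := cont_rpow (by linarith)
    exact ((continuous_const.mul h1).mul (p.continuous)).add
      (h2.mul ((derivative p).continuous))

lemma beta_aux : ∀ (n : ℕ) (a : ℝ), 2 ≤ a →
    ∫ u in (0:ℝ)..1, u ^ (a - 1) * (1 - u ^ 2) ^ n
      = 2 ^ n * n.factorial / ∏ j ∈ Finset.range (n + 1), (a + 2 * j) := by
  intro n
  induction n with
  | zero =>
    intro a ha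
    rw [Finset.prod_range_one]
    simp only [pow_zero, mul_one, Nat.cast_zero, mul_zero, add_zero,
      Nat.factorial_zero, Nat.cast_one, one_mul]
    rw [integral_rpow (Or.inl (by linarith : (-1:ℝ) < a - 1)), sub_add_cancel,
      Real.one_rpow, Real.zero_rpow (by positivity)]
    norm_num
  | succ n ih =>
    intro a ha
    set p : ℝ[X] := ((1 : ℝ[X]) - X ^ 2) ^ (n + 1) with hp
    have key := ibp_step a (by linarith) p
    have hint : ∀ u ∈ Set.uIcc (0:ℝ) 1,
        (a * u ^ (a - 1) * p.eval u + u ^ a * (derivative p).eval u)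
          = a * (u ^ (a - 1) * (1 - u ^ 2) ^ (n + 1))
            - (2 * (n + 1)) * (u ^ ((a + 2) - 1) * (1 - u ^ 2) ^ n) := by
      intro u hu
      rw [Set.uIcc_of_le (by norm_num : (0:ℝ) ≤ 1)] at hu
      have heval : p.eval u = (1 - u ^ 2) ^ (n + 1) := by simp [hp]
      have hderiv : (derivative p).eval u = ((n+1) * (1 - u ^ 2) ^ n) * (-(2 * u)) := by
        simp [hp, derivative_pow]
      rw [heval, hderiv]
      rcases eq_or_lt_of_le hu.1 with h0 | h0
      · rw [← h0, Real.zero_rpow (ne_of_gt (by linarith : (0:ℝ) < a - 1)),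
          Real.zero_rpow (ne_of_gt (by linarith : (0:ℝ) < a)),
          Real.zero_rpow (ne_of_gt (by linarith : (0:ℝ) < (a + 2) - 1))]
        ring
      · have : u ^ ((a + 2) - 1) = u ^ a * u := by
          rw [show (a + 2) - 1 = a + 1 by ring, Real.rpow_add h0, Real.rpow_one]
        rw [this]
        ring
    rw [intervalIntegral.integral_congr hint] at key
    have hf : Continuous fun u : ℝ => u ^ (a - 1) * (1 - u ^ 2) ^ (n + 1) :=
      (cont_rpow (by linarith)).mul (by continuity)
    have hg : Continuous fun u : ℝ => u ^ ((a + 2) - 1) * (1 - u ^ 2) ^ n :=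
      (cont_rpow (by linarith)).mul (by continuity)
    rw [intervalIntegral.integral_sub ((continuous_const.fun_mul hf).intervalIntegrable _ _)
        ((continuous_const.fun_mul hg).intervalIntegrable _ _),
      intervalIntegral.integral_const_mul, intervalIntegral.integral_const_mul] at key
    have hpeval : p.eval 1 = 0 := by simp [hp]
    rw [hpeval, ih (a + 2) (by linarith)] at key
    have hprod : ∏ j ∈ Finset.range (n + 2), (a + 2 * (j:ℝ))
        = a * ∏ j ∈ Finset.range (n + 1), ((a + 2) + 2 * (j:ℝ)) := by
      rw [Finset.prod_range_succ']
      have h2 : ∀ j ∈ Finset.range (n+1), (a + 2 * (((j:ℕ) + 1 : ℕ):ℝ)) = ((a + 2) + 2 * (j:ℝ)) := by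
        intro j _; push_cast; ring
      rw [Finset.prod_congr rfl h2]
      norm_num [mul_comm]
    have hpos : (0:ℝ) < ∏ j ∈ Finset.range (n + 1), ((a + 2) + 2 * (j:ℝ)) :=
      Finset.prod_pos (fun j _ => by positivity)
    rw [show n + 1 + 1 = n + 2 from rfl, hprod]
    have ha0 : a ≠ 0 := by positivity
    rw [Nat.factorial_succ]
    push_cast
    field_simp at key ⊢
    linear_combination key

lemma rodrigues_ibp (l : ℕ) (x : ℝ) (hx : (l:ℝ) + 3 ≤ x) :
    ∀ j ≤ l,
      ∫ u in (0:ℝ)..1, u ^ (x - 1) * (derivative^[l] (((X:ℝ[X])^2 - 1)^l)).eval u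
        = (-1:ℝ)^j * (∏ i ∈ Finset.Icc 1 j, (x - i)) *
          ∫ u in (0:ℝ)..1, u ^ (x - 1 - j) * (derivative^[l - j] (((X:ℝ[X])^2 - 1)^l)).eval u := by
  intro j
  induction j with
  | zero => intro _; simp
  | succ j ihj =>
    intro hj
    have hj' : j ≤ l := Nat.le_of_succ_le hj
    have hjl : (j:ℝ) ≤ (l:ℝ) - 1 := by
      have : (j:ℝ) + 1 ≤ l := by exact_mod_cast hj
      linarith
    have hc : (2:ℝ) ≤ x - 1 - j := by linarith
    rw [ihj hj']
    set Q : ℝ[X] := ((X:ℝ[X])^2 - 1)^l with hQ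
    set q : ℝ[X] := derivative^[l - (j+1)] Q with hq
    have hqd : derivative q = derivative^[l - j] Q := by
      rw [hq, show l - j = l - (j+1) + 1 by omega, Function.iterate_succ_apply']
    have key := ibp_step (x - 1 - j) hc q
    have h1 : q.eval 1 = 0 := root_one l _ (by omega)
    have hcont1 : Continuous fun u : ℝ => (x - 1 - j) * u ^ (x - 1 - j - 1) * q.eval u :=
      (continuous_const.mul (cont_rpow (by linarith))).mul q.continuous
    have hcont2 : Continuous fun u : ℝ => u ^ (x - 1 - j) * (derivative q).eval u :=
      (cont_rpow (by linarith)).mul (derivative q).continuous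
    rw [intervalIntegral.integral_add (hcont1.intervalIntegrable _ _)
      (hcont2.intervalIntegrable _ _), h1] at key
    have hsplit : ∫ u in (0:ℝ)..1, (x - 1 - j) * u ^ (x - 1 - j - 1) * q.eval u
        = (x - 1 - j) * ∫ u in (0:ℝ)..1, u ^ (x - 1 - j - 1) * q.eval u := by
      rw [← intervalIntegral.integral_const_mul]
      congr 1
      funext u
      ring
    rw [hsplit] at key
    have hA : ∫ u in (0:ℝ)..1, u ^ (x - 1 - j) * (derivative q).eval u
        = -((x - 1 - j) * ∫ u in (0:ℝ)..1, u ^ (x - 1 - j - 1) * q.eval u) := by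
      linarith
    have hexp : x - 1 - ((j+1 : ℕ):ℝ) = x - 1 - j - 1 := by push_cast; ring
    rw [hexp, ← hqd, hA, Finset.prod_Icc_succ_top (Nat.one_le_iff_ne_zero.mpr (Nat.succ_ne_zero j))]
    push_cast
    ring

lemma prod_Icc_eq_range (m : ℕ) (f : ℕ → ℝ) :
    ∏ k ∈ Finset.Icc 1 m, f k = ∏ j ∈ Finset.range m, f (j + 1) := by
  induction m with
  | zero => simp
  | succ m ih =>
    rw [Finset.prod_Icc_succ_top (Nat.one_le_iff_ne_zero.mpr (Nat.succ_ne_zero m)),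
      Finset.prod_range_succ, ih]

lemma prodP1 (m : ℕ) (x : ℝ) :
    ∏ i ∈ Finset.Icc 1 (2 * m + 1), (x - (i:ℝ))
      = (∏ k ∈ Finset.Icc 1 m, (x - 2 * (k:ℝ))) *
        ∏ k ∈ Finset.range (m + 1), (x - (2 * (k:ℝ) + 1)) := by
  induction m with
  | zero => simp
  | succ m ih =>
    rw [show 2 * (m + 1) + 1 = (2 * m + 2) + 1 by ring,
      Finset.prod_Icc_succ_top (by omega : 1 ≤ 2 * m + 2 + 1),
      show 2 * m + 2 = (2 * m + 1) + 1 by ring,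
      Finset.prod_Icc_succ_top (by omega : 1 ≤ 2 * m + 1 + 1),
      Finset.prod_Icc_succ_top (by omega : 1 ≤ m + 1),
      Finset.prod_range_succ, ih]
    push_cast
    ring

lemma prodP2 (m : ℕ) (x : ℝ) :
    ∏ j ∈ Finset.range (2 * m + 2), (x - (2 * (m:ℝ) + 1) + 2 * (j:ℝ))
      = (∏ k ∈ Finset.range (m + 1), (x - (2 * (k:ℝ) + 1))) *
        ∏ k ∈ Finset.range (m + 1), (x + (2 * (k:ℝ) + 1)) := by
  rw [show 2 * m + 2 = (m + 1) + (m + 1) by ring, Finset.prod_range_add]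
  congr 1
  · rw [← Finset.prod_range_reflect]
    apply Finset.prod_congr rfl
    intro j hj
    rw [Finset.mem_range] at hj
    have hjm : j ≤ m := by omega
    have : ((m + 1 - 1 - j : ℕ) : ℝ) = (m:ℝ) - (j:ℝ) := by
      rw [show m + 1 - 1 - j = m - j from rfl, Nat.cast_sub hjm]
    rw [this]
    ring
  · apply Finset.prod_congr rfl
    intro j hj
    push_cast
    ring

lemma closed_form (m : ℕ) (x : ℝ) (hx : ((2*m+1 : ℕ):ℝ) + 3 ≤ x) :
    ∫ u in (0:ℝ)..1, u ^ (x - 1) * legendre (2*m+1) u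
      = (∏ k ∈ Finset.Icc 1 m, (x - 2 * (k:ℝ)))
        / ((x + 1) * ∏ k ∈ Finset.Icc 1 m, (x + (2 * (k:ℝ) + 1))) := by
  have hm : ((2*m+1 : ℕ):ℝ) = 2*(m:ℝ)+1 := by push_cast; ring
  have hmx : 2*(m:ℝ)+1+3 ≤ x := by rw [← hm]; exact hx
  have hleg : (fun u : ℝ => u ^ (x-1) * legendre (2*m+1) u)
      = fun u => (1 / (2^(2*m+1) * ((2*m+1).factorial : ℝ))) *
          (u ^ (x-1) * (derivative^[2*m+1] (((X:ℝ[X])^2-1)^(2*m+1))).eval u) := by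
    funext u
    unfold legendre
    rw [q_eq (2*m+1), iteratedDeriv_poly]
    ring
  rw [show (∫ u in (0:ℝ)..1, u ^ (x - 1) * legendre (2*m+1) u)
      = ∫ u in (0:ℝ)..1, (1 / (2^(2*m+1) * ((2*m+1).factorial : ℝ))) *
          (u ^ (x-1) * (derivative^[2*m+1] (((X:ℝ[X])^2-1)^(2*m+1))).eval u) from by rw [← hleg],
    intervalIntegral.integral_const_mul,
    rodrigues_ibp (2*m+1) x hx (2*m+1) le_rfl]
  have h0 : (derivative^[2*m+1 - (2*m+1)] (((X:ℝ[X])^2-1)^(2*m+1))) = ((X:ℝ[X])^2-1)^(2*m+1) := by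
    rw [Nat.sub_self]
    rfl
  rw [h0]
  have heq : ∀ u ∈ Set.uIcc (0:ℝ) 1, u ^ (x-1-((2*m+1:ℕ):ℝ)) * ((((X:ℝ[X])^2-1)^(2*m+1)).eval u)
      = (-1:ℝ)^(2*m+1) * (u ^ ((x - ((2*m+1:ℕ):ℝ)) - 1) * (1 - u^2)^(2*m+1)) := by
    intro u _
    have h1 : ((((X:ℝ[X])^2-1)^(2*m+1)).eval u) = (u^2-1)^(2*m+1) := by simp
    rw [h1, show (u^2-1 : ℝ) = -(1-u^2) by ring, neg_pow,
      show x - 1 - ((2*m+1:ℕ):ℝ) = x - ((2*m+1:ℕ):ℝ) - 1 by ring]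
    ring
  rw [intervalIntegral.integral_congr heq, intervalIntegral.integral_const_mul,
    beta_aux (2*m+1) (x - ((2*m+1:ℕ):ℝ)) (by rw [hm]; linarith),
    prodP1 m x]
  have hden : ∏ j ∈ Finset.range (2*m+1+1), ((x - ((2*m+1:ℕ):ℝ)) + 2*(j:ℝ))
      = (∏ k ∈ Finset.range (m+1), (x - (2*(k:ℝ)+1))) *
        ∏ k ∈ Finset.range (m+1), (x + (2*(k:ℝ)+1)) := by
    rw [← prodP2 m x]
    apply Finset.prod_congr (by norm_num : Finset.range (2*m+1+1) = Finset.range (2*m+2))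
    intro j _
    rw [hm]
  rw [hden]
  have hB : ∏ k ∈ Finset.range (m+1), (x + (2*(k:ℝ)+1))
      = (x+1) * ∏ k ∈ Finset.Icc 1 m, (x + (2*(k:ℝ)+1)) := by
    rw [prod_Icc_eq_range m (fun k => x + (2*(k:ℝ)+1)), Finset.prod_range_succ']
    push_cast
    norm_num [mul_comm]
  rw [hB, Odd.neg_one_pow ⟨m, by ring⟩]
  have hO : (∏ k ∈ Finset.range (m+1), (x - (2*(k:ℝ)+1))) ≠ 0 := by
    rw [Finset.prod_ne_zero_iff]
    intro k hk
    rw [Finset.mem_range, Nat.lt_succ_iff] at hk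
    have : (k:ℝ) ≤ m := by exact_mod_cast hk
    have : (0:ℝ) < x - (2*(k:ℝ)+1) := by linarith
    linarith
  have hx1 : x + 1 ≠ 0 := by nlinarith
  have hB' : (∏ k ∈ Finset.Icc 1 m, (x + (2*(k:ℝ)+1))) ≠ 0 := by
    rw [Finset.prod_ne_zero_iff]
    intro k hk
    rw [Finset.mem_Icc] at hk
    have : (0:ℝ) ≤ (k:ℝ) := Nat.cast_nonneg k
    nlinarith
  have hfac : ((2*m+1).factorial : ℝ) ≠ 0 := Nat.cast_ne_zero.mpr (2*m+1).factorial_ne_zero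
  have h2l : (2:ℝ)^(2*m+1) ≠ 0 := by positivity
  field_simp

noncomputable def mf (l : ℕ) : ℝ → ℂ := Set.indicator (Set.Ioo 0 1) (fun t => (legendre l t : ℂ))

lemma legendre_continuous (l : ℕ) : Continuous (legendre l) := by
  have h : legendre l = fun u =>
      (1 / (2^l * (l.factorial:ℝ))) * ((derivative^[l] (((X:ℝ[X])^2-1)^l)).eval u) := by
    funext u
    unfold legendre
    rw [q_eq, iteratedDeriv_poly]
  rw [h]
  exact continuous_const.mul (Polynomial.continuous _)

lemma mellin_mf_eq (l : ℕ) (s : ℂ) :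
    mellin (mf l) s = ∫ u in Set.Ioo (0:ℝ) 1,
      Complex.exp ((s - 1) * (Real.log u : ℂ)) * (legendre l u : ℂ) := by
  rw [mellin]
  have h1 : ∀ t:ℝ, (t:ℂ) ^ (s-1) • mf l t
      = Set.indicator (Set.Ioo (0:ℝ) 1)
          (fun t => Complex.exp ((s - 1) * (Real.log t : ℂ)) * (legendre l t : ℂ)) t := by
    intro t
    by_cases ht : t ∈ Set.Ioo (0:ℝ) 1
    · rw [Set.indicator_of_mem ht, mf, Set.indicator_of_mem ht, smul_eq_mul]
      congr 1
      rw [Complex.cpow_def_of_ne_zero (by exact_mod_cast ne_of_gt ht.1),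
        Complex.ofReal_log ht.1.le, mul_comm]
    · rw [Set.indicator_of_notMem ht, mf, Set.indicator_of_notMem ht, smul_zero]
  simp_rw [h1]
  rw [MeasureTheory.setIntegral_indicator measurableSet_Ioo,
    Set.inter_eq_self_of_subset_right Set.Ioo_subset_Ioi_self]

lemma mf_integrable (l : ℕ) : Integrable (mf l) := by
  apply MeasureTheory.IntegrableOn.integrable_indicator _ measurableSet_Ioo
  apply MeasureTheory.IntegrableOn.mono_set _ Set.Ioo_subset_Icc_self
  exact (Complex.continuous_ofReal.comp (legendre_continuous l)).continuousOn.integrableOn_Icc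

lemma mellin_mf_diff (l : ℕ) {s : ℂ} (hs : 0 < s.re) :
    DifferentiableAt ℂ (mellin (mf l)) s := by
  obtain ⟨M, hM⟩ : ∃ M : ℝ, ∀ t : ℝ, ‖mf l t‖ ≤ M := by
    obtain ⟨M, hM⟩ := (isCompact_Icc (a := (0:ℝ)) (b := 1)).exists_bound_of_continuousOn
      ((Complex.continuous_ofReal.comp (legendre_continuous l)).continuousOn)
    refine ⟨max M 0, fun t => ?_⟩
    by_cases ht : t ∈ Set.Ioo (0:ℝ) 1
    · rw [mf, Set.indicator_of_mem ht]
      exact le_trans (hM t (Set.Ioo_subset_Icc_self ht)) (le_max_left _ _)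
    · rw [mf, Set.indicator_of_notMem ht]
      simp
  apply mellin_differentiableAt_of_isBigO_rpow (a := s.re + 1) (b := 0)
  · exact ((mf_integrable l).locallyIntegrable).locallyIntegrableOn _
  · have hev : (mf l) =ᶠ[atTop] (fun _ => (0:ℂ)) := by
      filter_upwards [Filter.eventually_ge_atTop (1:ℝ)] with t ht
      rw [mf, Set.indicator_of_notMem (by simp [Set.mem_Ioo]; intro h; linarith)]
    exact hev.trans_isBigO (Asymptotics.isBigO_zero _ _)
  · linarith
  · apply Asymptotics.IsBigO.of_bound M
    filter_upwards [self_mem_nhdsWithin] with t ht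
    have : (t:ℝ) ^ (-(0:ℝ)) = 1 := by
      rw [neg_zero, Real.rpow_zero]
    rw [this]
    simpa using hM t
  · exact hs

noncomputable def Gf (m : ℕ) : ℂ → ℂ := fun s =>
  (∏ k ∈ Finset.Icc 1 m, (s - 2*(k:ℂ))) / ((s+1) * ∏ k ∈ Finset.Icc 1 m, (s + (2*(k:ℂ)+1)))







lemma den_ne_zero (m : ℕ) {s : ℂ} (hs : 0 < s.re) :
    (s+1) * ∏ k ∈ Finset.Icc 1 m, (s + (2*(k:ℂ)+1)) ≠ 0 := by
  apply mul_ne_zero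
  · intro h
    have := congrArg Complex.re h
    simp at this
    linarith
  · rw [Finset.prod_ne_zero_iff]
    intro k _ h
    have := congrArg Complex.re h
    simp at this
    have hk : (0:ℝ) ≤ (k:ℝ) := Nat.cast_nonneg k
    linarith

lemma Gf_diff (m : ℕ) : DifferentiableOn ℂ (Gf m) {s : ℂ | 0 < s.re} := by
  apply DifferentiableOn.fun_div
  · apply DifferentiableOn.fun_finsetProd
    intro k _
    exact (differentiable_id.sub_const _).differentiableOn
  · apply DifferentiableOn.fun_mul
    · exact (differentiable_id.add_const _).differentiableOn
    · apply DifferentiableOn.fun_finsetProd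
      intro k _
      exact (differentiable_id.add_const _).differentiableOn
  · intro s hs
    exact den_ne_zero m hs

lemma real_case (m : ℕ) (x : ℝ) (hx : ((2*m+1:ℕ):ℝ) + 3 ≤ x) :
    mellin (mf (2*m+1)) ↑x = Gf m ↑x := by
  rw [mellin_mf_eq]
  have h1 : ∀ u ∈ Set.Ioo (0:ℝ) 1,
      Complex.exp (((x:ℂ) - 1) * (Real.log u : ℂ)) * (legendre (2*m+1) u : ℂ)
        = ((u ^ (x-1) * legendre (2*m+1) u : ℝ) : ℂ) := by
    intro u hu
    rw [show ((x:ℂ) - 1) * (Real.log u : ℂ) = ((Real.log u * (x-1) : ℝ) : ℂ) by push_cast; ring,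
      ← Complex.ofReal_exp, ← Real.rpow_def_of_pos hu.1]
    push_cast
    ring
  rw [MeasureTheory.setIntegral_congr_fun measurableSet_Ioo h1]
  have h3 : ∫ u in Set.Ioo (0:ℝ) 1, ((u ^ (x-1) * legendre (2*m+1) u : ℝ) : ℂ)
      = ((∫ u in Set.Ioo (0:ℝ) 1, u ^ (x-1) * legendre (2*m+1) u : ℝ) : ℂ) := by
    exact integral_ofReal (𝕜 := ℂ)
  rw [h3]
  have h2 : ∫ u in Set.Ioo (0:ℝ) 1, u ^ (x-1) * legendre (2*m+1) u
      = ∫ u in (0:ℝ)..1, u ^ (x-1) * legendre (2*m+1) u := by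
    rw [intervalIntegral.integral_of_le zero_le_one, MeasureTheory.integral_Ioc_eq_integral_Ioo]
  rw [h2, closed_form m x hx, Gf]
  push_cast
  norm_num

lemma mellin_eq_Gf (m : ℕ) {s : ℂ} (hs : 0 < s.re) : mellin (mf (2*m+1)) s = Gf m s := by
  have hopen : IsOpen {s : ℂ | 0 < s.re} := isOpen_lt continuous_const Complex.continuous_re
  have hpre : IsPreconnected {s : ℂ | 0 < s.re} := (convex_halfSpace_re_gt 0).isPreconnected
  have hH : AnalyticOnNhd ℂ (mellin (mf (2*m+1))) {s : ℂ | 0 < s.re} := by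
    apply DifferentiableOn.analyticOnNhd _ hopen
    intro z hz
    exact (mellin_mf_diff _ hz).differentiableWithinAt
  have hG : AnalyticOnNhd ℂ (Gf m) {s : ℂ | 0 < s.re} := (Gf_diff m).analyticOnNhd hopen
  have hz₀ : ((((2*m+1:ℕ):ℝ) + 4 : ℝ) : ℂ) ∈ {s : ℂ | 0 < s.re} := by
    simp only [Set.mem_setOf_eq, Complex.ofReal_re]
    positivity
  have hfreq : ∃ᶠ z in nhdsWithin ((((2*m+1:ℕ):ℝ) + 4 : ℝ) : ℂ) {((((2*m+1:ℕ):ℝ) + 4 : ℝ) : ℂ)}ᶜ,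
      mellin (mf (2*m+1)) z = Gf m z := by
    have ht : Tendsto (fun n : ℕ => ((((2*m+1:ℕ):ℝ) + 4 + 1/(n+1) : ℝ) : ℂ)) atTop
        (nhdsWithin ((((2*m+1:ℕ):ℝ) + 4 : ℝ) : ℂ) {((((2*m+1:ℕ):ℝ) + 4 : ℝ) : ℂ)}ᶜ) := by
      rw [tendsto_nhdsWithin_iff]
      constructor
      · have h0 : Tendsto (fun n : ℕ => (((2*m+1:ℕ):ℝ) + 4 + 1/(n+1) : ℝ)) atTop
            (nhds (((2*m+1:ℕ):ℝ) + 4)) := by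
          have := tendsto_one_div_add_atTop_nhds_zero_nat (𝕜 := ℝ)
          have h2 := (tendsto_const_nhds (x := (((2*m+1:ℕ):ℝ) + 4)) (f := atTop (α := ℕ))).add this
          simpa using h2
        exact (Complex.continuous_ofReal.continuousAt.tendsto).comp h0
      · apply Filter.Eventually.of_forall
        intro n
        simp only [Set.mem_compl_iff, Set.mem_singleton_iff]
        intro h
        have := congrArg Complex.re h
        simp only [Complex.ofReal_re] at this
        have hpos : (0:ℝ) < 1/(n+1) := by positivity
        linarith
    apply ht.frequently
    apply Filter.Frequently.of_forall
    intro n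
    apply real_case
    have hpos : (0:ℝ) < 1/(n+1) := by positivity
    linarith
  exact hH.eqOn_of_preconnected_of_frequently_eq hG hpre hz₀ hfreq hs

theorem stmt6 (l : ℕ) (hl : Odd l) (ω : ℝ) :
    Tendsto (fun ε : ℝ => ∫ u in Set.Ioo (0:ℝ) 1,
        Complex.exp (((ε : ℂ) - 1 + Complex.I * (ω : ℂ)) * (Real.log u : ℂ)) *
          (legendre l u : ℂ))
      (nhdsWithin 0 (Set.Ioi 0))
      (nhds ((1 / (1 + Complex.I * (ω : ℂ))) *
        ∏ k ∈ Finset.Icc 1 ((l - 1) / 2),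
          (((ω : ℂ) + 2 * (k : ℂ) * Complex.I) /
            ((ω : ℂ) - (2 * (k : ℂ) + 1) * Complex.I)))) := by
  obtain ⟨m, hm⟩ := hl
  have hm' : l = 2*m+1 := by omega
  subst hm'
  have hidx : (2*m+1-1)/2 = m := by omega
  rw [hidx]
  -- nonvanishing facts
  have hω1 : (1:ℂ) + Complex.I * ω ≠ 0 := by
    intro h
    have := congrArg Complex.re h
    simp [Complex.add_re, Complex.mul_re] at this
  have hω1' : (Complex.I * (ω:ℂ)) + 1 ≠ 0 := by
    intro h
    apply hω1
    rw [← h]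
    ring
  have hP : (∏ k ∈ Finset.Icc 1 m, ((Complex.I * (ω:ℂ)) + (2*(k:ℂ)+1))) ≠ 0 := by
    rw [Finset.prod_ne_zero_iff]
    intro k _ h
    have h2 := congrArg Complex.re h
    have hk : (0:ℝ) ≤ (k:ℝ) := Nat.cast_nonneg k
    simp [Complex.add_re, Complex.mul_re] at h2
    linarith
  have hQ : (∏ k ∈ Finset.Icc 1 m, ((ω:ℂ) - (2*(k:ℂ)+1)*Complex.I)) ≠ 0 := by
    rw [Finset.prod_ne_zero_iff]
    intro k _ h
    have h2 := congrArg Complex.im h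
    have hk : (0:ℝ) ≤ (k:ℝ) := Nat.cast_nonneg k
    simp [Complex.sub_im, Complex.mul_im] at h2
    linarith
  -- eventual equality with Gf
  have heq : ∀ ε ∈ Set.Ioi (0:ℝ),
      Gf m ((ε:ℂ) + Complex.I * ω)
        = ∫ u in Set.Ioo (0:ℝ) 1,
            Complex.exp (((ε : ℂ) - 1 + Complex.I * (ω : ℂ)) * (Real.log u : ℂ)) *
              (legendre (2*m+1) u : ℂ) := by
    intro ε hε
    have h1 : (∫ u in Set.Ioo (0:ℝ) 1,
        Complex.exp (((ε : ℂ) - 1 + Complex.I * ω) * (Real.log u : ℂ)) *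
          (legendre (2*m+1) u : ℂ)) = mellin (mf (2*m+1)) ((ε:ℂ) + Complex.I * ω) := by
      rw [mellin_mf_eq, show ((ε:ℂ) + Complex.I*(ω:ℂ) - 1) = ((ε:ℂ) - 1 + Complex.I*(ω:ℂ)) by ring]
    rw [h1, mellin_eq_Gf m]
    simp only [Complex.add_re, Complex.ofReal_re, Complex.mul_re, Complex.I_re, Complex.I_im,
      Complex.ofReal_im]
    simpa using hε
  -- continuity of Gf composite
  have hnum : Continuous fun s : ℂ => ∏ k ∈ Finset.Icc 1 m, (s - 2*(k:ℂ)) :=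
    continuous_finset_prod _ (fun k _ => continuous_id.sub continuous_const)
  have hden : Continuous fun s : ℂ => (s+1) * ∏ k ∈ Finset.Icc 1 m, (s + (2*(k:ℂ)+1)) :=
    (continuous_id.add continuous_const).mul
      (continuous_finset_prod _ (fun k _ => continuous_id.add continuous_const))
  have hdenne : ((Complex.I*(ω:ℂ))+1) * ∏ k ∈ Finset.Icc 1 m, ((Complex.I*(ω:ℂ)) + (2*(k:ℂ)+1)) ≠ 0 :=
    mul_ne_zero hω1' hP
  have hGc : ContinuousAt (Gf m) (Complex.I*(ω:ℂ)) :=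
    ContinuousAt.div hnum.continuousAt hden.continuousAt hdenne
  have hcomp : Continuous fun ε : ℝ => (ε:ℂ) + Complex.I*(ω:ℂ) :=
    Complex.continuous_ofReal.add continuous_const
  have hGt : Tendsto (fun ε : ℝ => Gf m ((ε:ℂ) + Complex.I*(ω:ℂ))) (nhdsWithin 0 (Set.Ioi 0))
      (nhds (Gf m (Complex.I*(ω:ℂ)))) := by
    have hGc' : ContinuousAt (Gf m) (((0:ℝ):ℂ) + Complex.I*(ω:ℂ)) := by simpa using hGc
    have h3 : ContinuousAt (fun ε : ℝ => Gf m ((ε:ℂ) + Complex.I*(ω:ℂ))) 0 :=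
      ContinuousAt.comp (x := (0:ℝ)) (g := Gf m)
        (f := fun ε : ℝ => (ε:ℂ) + Complex.I*(ω:ℂ)) hGc' hcomp.continuousAt
    have h4 := h3.tendsto.mono_left (nhdsWithin_le_nhds (s := Set.Ioi (0:ℝ)))
    simpa using h4
  -- value of Gf at I ω
  have hval : Gf m (Complex.I*(ω:ℂ)) = (1 / (1 + Complex.I * (ω:ℂ))) *
      ∏ k ∈ Finset.Icc 1 m,
        (((ω:ℂ) + 2*(k:ℂ)*Complex.I) / ((ω:ℂ) - (2*(k:ℂ)+1)*Complex.I)) := by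
    have hfac : ∀ k ∈ Finset.Icc 1 m,
        (((ω:ℂ) + 2*(k:ℂ)*Complex.I) / ((ω:ℂ) - (2*(k:ℂ)+1)*Complex.I))
          = ((Complex.I*(ω:ℂ)) - 2*(k:ℂ))/((Complex.I*(ω:ℂ)) + (2*(k:ℂ)+1)) := by
      intro k hk
      have hD : ((ω:ℂ) - (2*(k:ℂ)+1)*Complex.I) ≠ 0 := by
        intro h
        have h2 := congrArg Complex.im h
        have hk0 : (0:ℝ) ≤ (k:ℝ) := Nat.cast_nonneg k
        simp [Complex.sub_im, Complex.mul_im] at h2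
        linarith
      have hE : ((Complex.I*(ω:ℂ)) + (2*(k:ℂ)+1)) ≠ 0 := by
        intro h
        have h2 := congrArg Complex.re h
        have hk0 : (0:ℝ) ≤ (k:ℝ) := Nat.cast_nonneg k
        simp [Complex.add_re, Complex.mul_re] at h2
        linarith
      rw [div_eq_div_iff hD hE]
      linear_combination ((4*(k:ℂ)+1)*(ω:ℂ)) * Complex.I_sq
    rw [Finset.prod_congr rfl hfac, Finset.prod_div_distrib]
    simp only [Gf]
    rw [div_mul_eq_div_div_swap, div_eq_mul_inv, mul_comm, one_div,
      add_comm (Complex.I*(ω:ℂ)) 1]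
  rw [← hval]
  apply hGt.congr'
  filter_upwards [self_mem_nhdsWithin] with ε hε
  exact heq ε hε
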